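/- arXiv:2106.05419 — 5 statements merged into one kernel-verified Lean document; each statement's English description precedes it below -/
import Mathlib

section
/- Let G be a real m×n matrix and Z a real m×k matrix with GᵀZ = 0, and let D be the m×m diagonal matrix with diagonal entries d₁,…,d_m satisfying 0 < κmin ≤ dᵢ ≤ κmax for all i; set η = κmax/κmin. Then for all u ∈ ℝⁿ and w ∈ ℝᵏ, 2·|uᵀGᵀDZw| ≤ (1 − 1/η)·(uᵀGᵀDGu + wᵀZᵀDZw). -/
open Matrix

/-- With `GᵀZ = 0` and `D = diag(d)` where `0 < κmin ≤ dᵢ ≤ κmax`,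
setting `η = κmax/κmin`, we have for all `u, w`:
`2·|uᵀGᵀDZw| ≤ (1 - 1/η)·(uᵀGᵀDGu + wᵀZᵀDZw)`. -/
theorem cross_term_estimate {m n k : ℕ}
    (G : Matrix (Fin m) (Fin n) ℝ) (Z : Matrix (Fin m) (Fin k) ℝ)
    (hGZ : Gᵀ * Z = 0)
    (d : Fin m → ℝ) (κmin κmax : ℝ) (hκmin : 0 < κmin)
    (hd : ∀ i, κmin ≤ d i ∧ d i ≤ κmax) :
    ∀ (u : Fin n → ℝ) (w : Fin k → ℝ),
      2 * |u ⬝ᵥ ((Gᵀ * Matrix.diagonal d * Z) *ᵥ w)| ≤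
        (1 - 1 / (κmax / κmin)) *
          (u ⬝ᵥ ((Gᵀ * Matrix.diagonal d * G) *ᵥ u) +
            w ⬝ᵥ ((Zᵀ * Matrix.diagonal d * Z) *ᵥ w)) := by
  intro u w
  set x := G *ᵥ u with hx
  set y := Z *ᵥ w with hy
  have hred : ∀ (p q : ℕ) (A : Matrix (Fin m) (Fin p) ℝ) (B : Matrix (Fin m) (Fin q) ℝ)
      (v : Fin p → ℝ) (v' : Fin q → ℝ),
      v ⬝ᵥ ((Aᵀ * Matrix.diagonal d * B) *ᵥ v') = ∑ i, (A *ᵥ v) i * (d i * (B *ᵥ v') i) := by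
    intro p q A B v v'
    rw [Matrix.mul_assoc, ← Matrix.mulVec_mulVec, ← Matrix.mulVec_mulVec,
      Matrix.dotProduct_mulVec, Matrix.vecMul_transpose]
    simp [dotProduct, Matrix.mulVec_diagonal]
  have hxy : ∑ i, x i * y i = 0 := by
    have h : u ⬝ᵥ ((Gᵀ * Z) *ᵥ w) = 0 := by rw [hGZ]; simp
    rw [← Matrix.mulVec_mulVec, Matrix.dotProduct_mulVec, Matrix.vecMul_transpose] at h
    simpa [dotProduct] using h
  rw [hred n k G Z u w, hred n n G G u u, hred k k Z Z w w, ← hx, ← hy]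
  set c := 1 - 1 / (κmax / κmin) with hc
  have key : ∀ i : Fin m, 2 * ((d i - κmin) * |x i * y i|) ≤
      c * (x i * (d i * x i) + y i * (d i * y i)) := by
    intro i
    obtain ⟨h1, h2⟩ := hd i
    have hκmax : 0 < κmax := lt_of_lt_of_le hκmin (h1.trans h2)
    have hc' : c = 1 - κmin / κmax := by rw [hc, one_div_div]
    have habs : 2 * |x i * y i| ≤ x i ^ 2 + y i ^ 2 := by
      rw [abs_mul]
      nlinarith [sq_nonneg (|x i| - |y i|), sq_abs (x i), sq_abs (y i),
        abs_nonneg (x i), abs_nonneg (y i)]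
    have hcd : d i - κmin ≤ c * d i := by
      rw [hc']
      have h3 : κmin * d i / κmax ≤ κmin := by
        rw [div_le_iff₀ hκmax]; nlinarith
      have : (1 - κmin / κmax) * d i = d i - κmin * d i / κmax := by ring
      linarith [this ▸ le_refl ((1 - κmin / κmax) * d i)]
    have hsub : 0 ≤ d i - κmin := by linarith
    have hsq : 0 ≤ x i ^ 2 + y i ^ 2 := by positivity
    nlinarith [mul_le_mul_of_nonneg_left habs hsub, mul_le_mul_of_nonneg_right hcd hsq]
  have hrw : ∑ i, x i * (d i * y i) = ∑ i, (d i - κmin) * (x i * y i) := by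
    have h : ∑ i, (d i - κmin) * (x i * y i)
        = (∑ i, x i * (d i * y i)) - κmin * ∑ i, x i * y i := by
      rw [Finset.mul_sum, ← Finset.sum_sub_distrib]
      exact Finset.sum_congr rfl (fun i _ => by ring)
    rw [h, hxy]; ring
  rw [hrw]
  calc 2 * |∑ i, (d i - κmin) * (x i * y i)|
      ≤ 2 * ∑ i, |(d i - κmin) * (x i * y i)| := by
        have := Finset.abs_sum_le_sum_abs (fun i => (d i - κmin) * (x i * y i)) Finset.univ
        linarith
    _ = ∑ i, 2 * ((d i - κmin) * |x i * y i|) := by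
        rw [Finset.mul_sum]
        refine Finset.sum_congr rfl (fun i _ => ?_)
        rw [abs_mul, abs_of_nonneg (by linarith [(hd i).1] : (0:ℝ) ≤ d i - κmin)]
    _ ≤ ∑ i, c * (x i * (d i * x i) + y i * (d i * y i)) :=
        Finset.sum_le_sum (fun i _ => key i)
    _ = c * ((∑ i, x i * (d i * x i)) + ∑ i, y i * (d i * y i)) := by
        rw [← Finset.mul_sum, Finset.sum_add_distrib]
end

section
/- Let G be a real m×n matrix and Z a real m×k matrix with GᵀZ = 0, and let D be the m×m diagonal matrix with diagonal entries d₁,…,d_m satisfying 0 < κmin ≤ dᵢ ≤ κmax for all i; set η = κmax/κmin. For u ∈ ℝⁿ and w ∈ ℝᵏ, write s(u,w) = uᵀGᵀDGu + wᵀZᵀDZw and q(u,w) = s(u,w) + 2·uᵀGᵀDZw. Then for all u, w: (1/η)·s(u,w) ≤ q(u,w) ≤ (2 − 1/η)·s(u,w). (Here s is the quadratic form of the block-diagonal matrix A = blockdiag(GᵀDG, ZᵀDZ) and q is the quadratic form of the preconditioner M = HᵀDH with H = [G Z].) -/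
open Matrix

lemma quad_form_sum {m p r : ℕ} (A : Matrix (Fin m) (Fin p) ℝ) (B : Matrix (Fin m) (Fin r) ℝ)
    (d : Fin m → ℝ) (u : Fin p → ℝ) (w : Fin r → ℝ) :
    u ⬝ᵥ ((Aᵀ * Matrix.diagonal d * B) *ᵥ w) = ∑ i, d i * ((A *ᵥ u) i * (B *ᵥ w) i) := by
  rw [← Matrix.mulVec_mulVec, ← Matrix.mulVec_mulVec, Matrix.dotProduct_mulVec,
    Matrix.vecMul_transpose]
  simp only [dotProduct, Matrix.mulVec_diagonal]
  apply Finset.sum_congr rfl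
  intro i _
  ring

/-- With `GᵀZ = 0` and `D = diag(d)`, `0 < κmin ≤ dᵢ ≤ κmax`, `η = κmax/κmin`,
writing `s(u,w) = uᵀGᵀDGu + wᵀZᵀDZw` and `q(u,w) = s(u,w) + 2·uᵀGᵀDZw`, we have
`(1/η)·s(u,w) ≤ q(u,w) ≤ (2 - 1/η)·s(u,w)` for all `u, w`. -/
theorem spectral_equivalence {m n k : ℕ}
    (G : Matrix (Fin m) (Fin n) ℝ) (Z : Matrix (Fin m) (Fin k) ℝ)
    (hGZ : Gᵀ * Z = 0)
    (d : Fin m → ℝ) (κmin κmax : ℝ) (hκmin : 0 < κmin)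
    (hd : ∀ i, κmin ≤ d i ∧ d i ≤ κmax)
    (s q : (Fin n → ℝ) → (Fin k → ℝ) → ℝ)
    (hs : ∀ u w, s u w = u ⬝ᵥ ((Gᵀ * Matrix.diagonal d * G) *ᵥ u) +
        w ⬝ᵥ ((Zᵀ * Matrix.diagonal d * Z) *ᵥ w))
    (hq : ∀ u w, q u w = s u w + 2 * (u ⬝ᵥ ((Gᵀ * Matrix.diagonal d * Z) *ᵥ w))) :
    ∀ (u : Fin n → ℝ) (w : Fin k → ℝ),
      (1 / (κmax / κmin)) * s u w ≤ q u w ∧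
        q u w ≤ (2 - 1 / (κmax / κmin)) * s u w := by
  intro u w
  set x : Fin m → ℝ := G *ᵥ u with hx
  set y : Fin m → ℝ := Z *ᵥ w with hy
  have hxy : ∑ i, x i * y i = 0 := by
    have h0 : u ⬝ᵥ ((Gᵀ * Z) *ᵥ w) = 0 := by rw [hGZ]; simp
    rw [← Matrix.mulVec_mulVec, Matrix.dotProduct_mulVec, Matrix.vecMul_transpose] at h0
    simpa [dotProduct, hx, hy] using h0
  have hS : s u w = ∑ i, d i * (x i * x i + y i * y i) := by
    rw [hs, quad_form_sum, quad_form_sum, ← Finset.sum_add_distrib]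
    apply Finset.sum_congr rfl
    intro i _
    ring
  have hQ : q u w = ∑ i, d i * (x i + y i) ^ 2 := by
    rw [hq, hS, quad_form_sum, Finset.mul_sum, ← Finset.sum_add_distrib]
    apply Finset.sum_congr rfl
    intro i _
    ring
  set T : ℝ := ∑ i, (x i * x i + y i * y i) with hT
  have hT0 : 0 ≤ T := by
    apply Finset.sum_nonneg
    intro i _
    nlinarith [sq_nonneg (x i), sq_nonneg (y i)]
  have h1 : s u w ≤ κmax * T := by
    rw [hS, hT, Finset.mul_sum]
    apply Finset.sum_le_sum
    intro i _
    have := (hd i).2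
    nlinarith [sq_nonneg (x i), sq_nonneg (y i)]
  have e1 : ∑ i, (x i + y i) ^ 2 = T := by
    have : ∑ i, (x i + y i) ^ 2
        = (∑ i, (x i * x i + y i * y i)) + 2 * ∑ i, x i * y i := by
      rw [Finset.mul_sum, ← Finset.sum_add_distrib]
      apply Finset.sum_congr rfl
      intro i _
      ring
    rw [this, hxy, ← hT]; ring
  have e2 : ∑ i, (x i - y i) ^ 2 = T := by
    have : ∑ i, (x i - y i) ^ 2
        = (∑ i, (x i * x i + y i * y i)) - 2 * ∑ i, x i * y i := by
      rw [Finset.mul_sum, ← Finset.sum_sub_distrib]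
      apply Finset.sum_congr rfl
      intro i _
      ring
    rw [this, hxy, ← hT]; ring
  have h2 : κmin * T ≤ q u w := by
    rw [hQ, ← e1, Finset.mul_sum]
    apply Finset.sum_le_sum
    intro i _
    exact mul_le_mul_of_nonneg_right (hd i).1 (sq_nonneg _)
  have h3 : κmin * T ≤ 2 * s u w - q u w := by
    have hd2 : 2 * s u w - q u w = ∑ i, d i * (x i - y i) ^ 2 := by
      rw [hS, hQ, Finset.mul_sum, ← Finset.sum_sub_distrib]
      apply Finset.sum_congr rfl
      intro i _
      ring
    rw [hd2, ← e2, Finset.mul_sum]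
    apply Finset.sum_le_sum
    intro i _
    exact mul_le_mul_of_nonneg_right (hd i).1 (sq_nonneg _)
  by_cases hm : m = 0
  · subst hm
    have hs0 : s u w = 0 := by rw [hS]; simp
    have hq0 : q u w = 0 := by rw [hQ]; simp
    rw [hs0, hq0]
    norm_num
  · have hκmax : 0 < κmax := by
      have i0 : Fin m := ⟨0, Nat.pos_of_ne_zero hm⟩
      exact lt_of_lt_of_le hκmin ((hd i0).1.trans (hd i0).2)
    have hη : 1 / (κmax / κmin) = κmin / κmax := one_div_div _ _
    have hpos : 0 ≤ κmin / κmax := le_of_lt (div_pos hκmin hκmax)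
    have h4 : κmin / κmax * s u w ≤ κmin * T := by
      have := mul_le_mul_of_nonneg_left h1 hpos
      calc κmin / κmax * s u w ≤ κmin / κmax * (κmax * T) := this
        _ = κmin * T := by field_simp
    rw [hη]
    constructor
    · linarith
    · nlinarith [h3, h4]
end

section
/- Let G be a real m×n matrix and Z a real m×k matrix with GᵀZ = 0, and let D be the m×m diagonal matrix with diagonal entries d₁,…,d_m satisfying 0 < κmin ≤ dᵢ ≤ κmax for all i; set η = κmax/κmin. With s(u,w) = uᵀGᵀDGu + wᵀZᵀDZw and q(u,w) = s(u,w) + 2·uᵀGᵀDZw, for any pairs (u,w) and (u',w') with q(u,w) > 0 and s(u',w') > 0 one has (s(u,w)/q(u,w)) · (q(u',w')/s(u',w')) ≤ 2η − 1. In other words, the condition number of the preconditioned operator M⁻¹A, measured as the ratio of the extreme generalized Rayleigh quotients of A with respect to M, is at most 2η − 1. -/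
open Matrix

private lemma dot_sandwich {m p r : ℕ} (d : Fin m → ℝ)
    (P : Matrix (Fin m) (Fin p) ℝ) (Q : Matrix (Fin m) (Fin r) ℝ)
    (a : Fin p → ℝ) (b : Fin r → ℝ) :
    a ⬝ᵥ ((Pᵀ * Matrix.diagonal d * Q) *ᵥ b) =
      ∑ i, d i * ((P *ᵥ a) i * (Q *ᵥ b) i) := by
  rw [Matrix.mul_assoc, ← Matrix.mulVec_mulVec, Matrix.dotProduct_mulVec,
    Matrix.vecMul_transpose, ← Matrix.mulVec_mulVec]
  simp only [dotProduct, Matrix.mulVec_diagonal]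
  exact Finset.sum_congr rfl fun i _ => by ring

private lemma key_bounds {m : ℕ} (d : Fin m → ℝ) (κmin κmax : ℝ)
    (hκ : 0 < κmin) (hκ' : κmin ≤ κmax)
    (hd : ∀ i, κmin ≤ d i ∧ d i ≤ κmax) (x y : Fin m → ℝ)
    (hxy : ∑ i, x i * y i = 0) :
    κmin * (∑ i, d i * ((x i)^2 + (y i)^2)) ≤
        κmax * (∑ i, d i * ((x i)^2 + (y i)^2) + ∑ i, 2 * (d i * (x i * y i))) ∧
    κmax * (∑ i, d i * ((x i)^2 + (y i)^2) + ∑ i, 2 * (d i * (x i * y i))) ≤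
        (2 * κmax - κmin) * (∑ i, d i * ((x i)^2 + (y i)^2)) := by
  have hκmax : 0 < κmax := lt_of_lt_of_le hκ hκ'
  set A := ∑ i, d i * ((x i)^2 + (y i)^2) with hA
  set S := ∑ i, ((x i)^2 + (y i)^2) with hS
  set C := ∑ i, 2 * (d i * (x i * y i)) with hC
  have hAS : A ≤ κmax * S := by
    rw [hS, Finset.mul_sum]
    exact Finset.sum_le_sum fun i _ => by
      nlinarith [(hd i).2, sq_nonneg (x i), sq_nonneg (y i)]
  have hSA : κmin * S ≤ A := by
    rw [hS, Finset.mul_sum]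
    exact Finset.sum_le_sum fun i _ => by
      nlinarith [(hd i).1, sq_nonneg (x i), sq_nonneg (y i)]
  have hA0 : 0 ≤ A :=
    Finset.sum_nonneg fun i _ => by nlinarith [(hd i).1, sq_nonneg (x i), sq_nonneg (y i)]
  have hCrw : C = ∑ i, 2 * ((d i - κmin) * (x i * y i)) := by
    rw [hC]
    have : ∑ i, 2 * ((d i - κmin) * (x i * y i)) =
        (∑ i, 2 * (d i * (x i * y i))) - 2 * κmin * ∑ i, x i * y i := by
      rw [Finset.mul_sum, ← Finset.sum_sub_distrib]
      exact Finset.sum_congr rfl fun i _ => by ring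
    rw [this, hxy]; ring
  have hCub : C ≤ A - κmin * S := by
    rw [hCrw, hA, hS, Finset.mul_sum, ← Finset.sum_sub_distrib]
    exact Finset.sum_le_sum fun i _ => by nlinarith [(hd i).1, sq_nonneg (x i - y i)]
  have hClb : -(A - κmin * S) ≤ C := by
    rw [hCrw, hA, hS, Finset.mul_sum, ← Finset.sum_sub_distrib, ← Finset.sum_neg_distrib]
    exact Finset.sum_le_sum fun i _ => by nlinarith [(hd i).1, sq_nonneg (x i + y i)]
  constructor
  · nlinarith [mul_le_mul_of_nonneg_left hAS hκ.le]
  · nlinarith [mul_le_mul_of_nonneg_left hAS hκ.le]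

/-- With `GᵀZ = 0`, `D = diag(d)`, `0 < κmin ≤ dᵢ ≤ κmax`, `η = κmax/κmin`,
`s(u,w) = uᵀGᵀDGu + wᵀZᵀDZw` and `q(u,w) = s(u,w) + 2·uᵀGᵀDZw`, for any pairs `(u,w)` and
`(u',w')` with `q(u,w) > 0` and `s(u',w') > 0` one has
`(s(u,w)/q(u,w)) · (q(u',w')/s(u',w')) ≤ 2η - 1`. -/
theorem condition_number_bound {m n k : ℕ}
    (G : Matrix (Fin m) (Fin n) ℝ) (Z : Matrix (Fin m) (Fin k) ℝ)
    (hGZ : Gᵀ * Z = 0)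
    (d : Fin m → ℝ) (κmin κmax : ℝ) (hκmin : 0 < κmin)
    (hd : ∀ i, κmin ≤ d i ∧ d i ≤ κmax)
    (s q : (Fin n → ℝ) → (Fin k → ℝ) → ℝ)
    (hs : ∀ u w, s u w = u ⬝ᵥ ((Gᵀ * Matrix.diagonal d * G) *ᵥ u) +
        w ⬝ᵥ ((Zᵀ * Matrix.diagonal d * Z) *ᵥ w))
    (hq : ∀ u w, q u w = s u w + 2 * (u ⬝ᵥ ((Gᵀ * Matrix.diagonal d * Z) *ᵥ w))) :
    ∀ (u : Fin n → ℝ) (w : Fin k → ℝ) (u' : Fin n → ℝ) (w' : Fin k → ℝ),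
      0 < q u w → 0 < s u' w' →
        (s u w / q u w) * (q u' w' / s u' w') ≤ 2 * (κmax / κmin) - 1 := by
  intro u w u' w' hqpos hspos
  -- rewrite s and q as sums
  have hsum : ∀ (a : Fin n → ℝ) (b : Fin k → ℝ),
      s a b = ∑ i, d i * (((G *ᵥ a) i)^2 + ((Z *ᵥ b) i)^2) := by
    intro a b
    rw [hs, dot_sandwich, dot_sandwich, ← Finset.sum_add_distrib]
    exact Finset.sum_congr rfl fun i _ => by ring
  have hqsum : ∀ (a : Fin n → ℝ) (b : Fin k → ℝ),
      q a b = ∑ i, d i * (((G *ᵥ a) i)^2 + ((Z *ᵥ b) i)^2)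
        + ∑ i, 2 * (d i * ((G *ᵥ a) i * (Z *ᵥ b) i)) := by
    intro a b
    rw [hq, hsum, dot_sandwich, Finset.mul_sum]
  have horth : ∀ (a : Fin n → ℝ) (b : Fin k → ℝ),
      ∑ i, (G *ᵥ a) i * (Z *ᵥ b) i = 0 := by
    intro a b
    have h0 : a ⬝ᵥ ((Gᵀ * Matrix.diagonal (fun _ : Fin m => (1:ℝ)) * Z) *ᵥ b) = 0 := by
      rw [Matrix.diagonal_one, Matrix.mul_one, hGZ, Matrix.zero_mulVec, dotProduct_zero]
    rw [dot_sandwich] at h0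
    simpa using h0
  -- nonempty case analysis on m
  rcases Nat.eq_zero_or_pos m with hm | hm
  · exfalso
    subst hm
    rw [hqsum] at hqpos
    simp at hqpos
  have hκ' : κmin ≤ κmax := le_trans (hd ⟨0, hm⟩).1 (hd ⟨0, hm⟩).2
  have hκmax : 0 < κmax := lt_of_lt_of_le hκmin hκ'
  obtain ⟨h1, _⟩ := key_bounds d κmin κmax hκmin hκ' hd (G *ᵥ u) (Z *ᵥ w) (horth u w)
  obtain ⟨h1', h2'⟩ := key_bounds d κmin κmax hκmin hκ' hd (G *ᵥ u') (Z *ᵥ w') (horth u' w')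
  rw [← hqsum, ← hsum] at h1
  rw [← hqsum, ← hsum] at h1' h2'
  have hq'0 : 0 ≤ q u' w' := by nlinarith
  have hs0 : 0 ≤ s u w := by
    rw [hsum]
    exact Finset.sum_nonneg fun i _ => by
      nlinarith [(hd i).1, sq_nonneg ((G *ᵥ u) i), sq_nonneg ((Z *ᵥ w) i)]
  have hb1 : s u w / q u w ≤ κmax / κmin :=
    (div_le_div_iff₀ hqpos hκmin).mpr (by nlinarith)
  have hb2 : q u' w' / s u' w' ≤ (2 * κmax - κmin) / κmax :=
    (div_le_div_iff₀ hspos hκmax).mpr (by nlinarith)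
  have hprod : (s u w / q u w) * (q u' w' / s u' w') ≤
      (κmax / κmin) * ((2 * κmax - κmin) / κmax) :=
    mul_le_mul hb1 hb2 (div_nonneg hq'0 hspos.le) (div_nonneg hκmax.le hκmin.le)
  calc (s u w / q u w) * (q u' w' / s u' w') ≤
      (κmax / κmin) * ((2 * κmax - κmin) / κmax) := hprod
    _ = 2 * (κmax / κmin) - 1 := by field_simp
end

section
/- Let G be a real m×n matrix and Z a real m×k matrix with GᵀZ = 0, and let D be the m×m diagonal matrix with diagonal entries d₁,…,d_m satisfying 0 < κmin ≤ dᵢ ≤ κmax for all i; set η = κmax/κmin. Let A = blockdiag(GᵀDG, ZᵀDZ) and M = HᵀDH with H = [G Z]. If x ∈ ℝⁿ⁺ᵏ is nonzero with xᵀMx > 0 and λ ∈ ℝ satisfies Ax = λ·Mx, then 1/(2 − 1/η) ≤ λ ≤ η. -/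
open Matrix

-- key scalar lemma
lemma key_est (m : ℕ) (d u v : Fin m → ℝ) (κmin κmax : ℝ) (hκ : 0 < κmin)
    (hle : κmin ≤ κmax)
    (hd : ∀ i, κmin ≤ d i ∧ d i ≤ κmax) (huv : ∑ i, u i * v i = 0) :
    |∑ i, d i * (u i * v i)| ≤ (1 - κmin/κmax)/2 * ∑ i, d i * ((u i)^2 + (v i)^2) := by
  have hκmax : 0 < κmax := lt_of_lt_of_le hκ hle
  have h1 : ∑ i, d i * (u i * v i) = ∑ i, (d i - κmin) * (u i * v i) := by
    simp [sub_mul, Finset.sum_sub_distrib, ← Finset.mul_sum, huv]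
  rw [h1]
  calc |∑ i, (d i - κmin) * (u i * v i)| ≤ ∑ i, |(d i - κmin) * (u i * v i)| :=
        Finset.abs_sum_le_sum_abs _ _
    _ ≤ ∑ i, (1 - κmin/κmax)/2 * (d i * ((u i)^2 + (v i)^2)) := by
        apply Finset.sum_le_sum
        intro i _
        obtain ⟨h2, h3⟩ := hd i
        have hd0 : 0 < d i := lt_of_lt_of_le hκ h2
        have hdk : d i - κmin ≤ d i * (1 - κmin/κmax) := by
          rw [mul_sub, mul_one, sub_le_sub_iff_left]
          rw [mul_div_assoc', div_le_iff₀ hκmax]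
          nlinarith
        have habs : |u i * v i| ≤ ((u i)^2 + (v i)^2)/2 := by
          rw [abs_mul]
          nlinarith [abs_nonneg (u i), abs_nonneg (v i), sq_abs (u i), sq_abs (v i),
            sq_nonneg (|u i| - |v i|)]
        rw [abs_mul, abs_of_nonneg (by linarith : (0:ℝ) ≤ d i - κmin)]
        calc (d i - κmin) * |u i * v i| ≤ (d i * (1 - κmin/κmax)) * (((u i)^2 + (v i)^2)/2) := by
              apply mul_le_mul hdk habs (abs_nonneg _)
              have : 0 ≤ 1 - κmin/κmax := by
                rw [sub_nonneg, div_le_one hκmax]; exact hle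
              positivity
          _ = (1 - κmin/κmax)/2 * (d i * ((u i)^2 + (v i)^2)) := by ring
    _ = (1 - κmin/κmax)/2 * ∑ i, d i * ((u i)^2 + (v i)^2) := by rw [Finset.mul_sum]

/-- With `GᵀZ = 0`, `D = diag(d)`, `0 < κmin ≤ dᵢ ≤ κmax`, `η = κmax/κmin`,
`A = blockdiag(GᵀDG, ZᵀDZ)` and `M = HᵀDH` with `H = [G Z]`: if `x ≠ 0`, `xᵀMx > 0` and
`Ax = λ·Mx`, then `1/(2 - 1/η) ≤ λ ≤ η`. -/
theorem generalized_eigenvalue_bounds {m n k : ℕ}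
    (G : Matrix (Fin m) (Fin n) ℝ) (Z : Matrix (Fin m) (Fin k) ℝ)
    (hGZ : Gᵀ * Z = 0)
    (d : Fin m → ℝ) (κmin κmax : ℝ) (hκmin : 0 < κmin)
    (hd : ∀ i, κmin ≤ d i ∧ d i ≤ κmax)
    (A M : Matrix (Fin n ⊕ Fin k) (Fin n ⊕ Fin k) ℝ)
    (hA : A = Matrix.fromBlocks (Gᵀ * Matrix.diagonal d * G) 0 0
        (Zᵀ * Matrix.diagonal d * Z))
    (hM : M = (Matrix.fromCols G Z)ᵀ * Matrix.diagonal d * Matrix.fromCols G Z)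
    (x : Fin n ⊕ Fin k → ℝ) (hx : x ≠ 0) (hxM : 0 < x ⬝ᵥ (M *ᵥ x))
    (lam : ℝ) (hlam : A *ᵥ x = lam • (M *ᵥ x)) :
    1 / (2 - 1 / (κmax / κmin)) ≤ lam ∧ lam ≤ κmax / κmin := by
  rcases Nat.eq_zero_or_pos m with hm | hm
  · exfalso
    subst hm
    have hM0 : M = 0 := by
      subst hM; ext i j; simp [Matrix.mul_apply]
    rw [hM0] at hxM
    simp at hxM
  have hle : κmin ≤ κmax := le_trans (hd ⟨0, hm⟩).1 (hd ⟨0, hm⟩).2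
  have hκmax : 0 < κmax := lt_of_lt_of_le hκmin hle
  set x1 : Fin n → ℝ := x ∘ Sum.inl with hx1
  set x2 : Fin k → ℝ := x ∘ Sum.inr with hx2
  have hxelim : x = Sum.elim x1 x2 := (Sum.elim_comp_inl_inr x).symm
  set u : Fin m → ℝ := G *ᵥ x1 with hu
  set v : Fin m → ℝ := Z *ᵥ x2 with hv
  -- orthogonality
  have horth : ∑ i, u i * v i = 0 := by
    have : u ⬝ᵥ v = x1 ⬝ᵥ ((Gᵀ * Z) *ᵥ x2) := by
      symm
      rw [← Matrix.mulVec_mulVec, Matrix.dotProduct_mulVec, Matrix.vecMul_transpose]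
    simpa [dotProduct, hGZ] using this
  -- quadratic forms
  have hSM : x ⬝ᵥ (M *ᵥ x) = ∑ i, d i * (u i + v i)^2 := by
    rw [hM, hxelim, ← Matrix.mulVec_mulVec, ← Matrix.mulVec_mulVec,
      Matrix.dotProduct_mulVec, Matrix.vecMul_transpose,
      Matrix.fromCols_mulVec_sumElim]
    simp only [dotProduct, Matrix.mulVec_diagonal, Pi.add_apply]
    apply Finset.sum_congr rfl
    intro i _
    have hui : (G *ᵥ x1) i = u i := rfl
    have hvi : (Z *ᵥ x2) i = v i := rfl
    rw [hui, hvi]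
    ring
  have hSA : x ⬝ᵥ (A *ᵥ x) = ∑ i, d i * ((u i)^2 + (v i)^2) := by
    rw [hA, hxelim, Matrix.fromBlocks_mulVec]
    simp only [Matrix.zero_mulVec, add_zero, zero_add]
    rw [← Matrix.mulVec_mulVec, ← Matrix.mulVec_mulVec,
      ← Matrix.mulVec_mulVec, ← Matrix.mulVec_mulVec]
    have hsplit : ((x1 ⊕ᵥ x2 : Fin n ⊕ Fin k → ℝ) ⬝ᵥ
        (Sum.elim (Gᵀ *ᵥ (Matrix.diagonal d *ᵥ (G *ᵥ x1)))
          (Zᵀ *ᵥ (Matrix.diagonal d *ᵥ (Z *ᵥ x2))))) =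
        x1 ⬝ᵥ (Gᵀ *ᵥ (Matrix.diagonal d *ᵥ (G *ᵥ x1))) +
        x2 ⬝ᵥ (Zᵀ *ᵥ (Matrix.diagonal d *ᵥ (Z *ᵥ x2))) := by
      simp [dotProduct, Fintype.sum_sum_type]
    rw [Sum.elim_comp_inl, Sum.elim_comp_inr, hsplit]
    rw [Matrix.dotProduct_mulVec x1, Matrix.vecMul_transpose,
      Matrix.dotProduct_mulVec x2, Matrix.vecMul_transpose]
    simp only [dotProduct, Matrix.mulVec_diagonal]
    rw [← Finset.sum_add_distrib]
    apply Finset.sum_congr rfl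
    intro i _
    have hui : (G *ᵥ x1) i = u i := rfl
    have hvi : (Z *ᵥ x2) i = v i := rfl
    rw [hui, hvi]
    ring
  set SA := ∑ i, d i * ((u i)^2 + (v i)^2) with hSAdef
  set SM := ∑ i, d i * (u i + v i)^2 with hSMdef
  have hSMpos : 0 < SM := by rw [← hSM]; exact hxM
  have hC := key_est m d u v κmin κmax hκmin hle hd horth
  have hexp : SM = SA + 2 * ∑ i, d i * (u i * v i) := by
    rw [hSAdef, hSMdef, Finset.mul_sum, ← Finset.sum_add_distrib]
    apply Finset.sum_congr rfl
    intro i _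
    ring
  set r := κmin / κmax with hr
  have hr0 : 0 < r := by positivity
  have hr1 : r ≤ 1 := by rw [hr, div_le_one hκmax]; exact hle
  have hlow : r * SA ≤ SM := by
    rw [hexp]
    have := abs_le.mp hC
    linarith [this.1]
  have hup : SM ≤ (2 - r) * SA := by
    rw [hexp]
    have := abs_le.mp hC
    linarith [this.2]
  have heq : SA = lam * SM := by
    rw [← hSA, ← hSM, hlam, dotProduct_smul, smul_eq_mul, hSM]
  have hgoal1 : 1 / (2 - r) ≤ lam := by
    rw [div_le_iff₀ (by linarith : (0:ℝ) < 2 - r)]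
    nlinarith
  have hgoal2 : lam ≤ κmax / κmin := by
    have h1 : r * lam ≤ 1 := by nlinarith
    have : lam ≤ 1 / r := by rw [le_div_iff₀ hr0]; linarith [mul_comm r lam]
    rwa [hr, one_div, inv_div] at this
  refine ⟨?_, hgoal2⟩
  have : 1 / (κmax / κmin) = r := by rw [hr, one_div, inv_div]
  rw [this]
  exact hgoal1
end

section
/- Let m, n, k be natural numbers with n + k = m. Let D be a symmetric positive definite real m×m matrix, G a real m×n matrix with rank G = n, and Z a real m×k matrix with rank Z = k, and suppose GᵀZ = 0. Then the m×m matrix [DG Z], whose first n columns are those of DG and whose last k columns are those of Z, is invertible. -/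
open Matrix

lemma full_rank_mulVec_eq_zero {m n : ℕ} (G : Matrix (Fin m) (Fin n) ℝ)
    (hG : G.rank = n) {v : Fin n → ℝ} (hv : G *ᵥ v = 0) : v = 0 := by
  have hker : LinearMap.ker G.mulVecLin = ⊥ := by
    have h1 := LinearMap.finrank_range_add_finrank_ker G.mulVecLin
    rw [Matrix.rank] at hG
    rw [hG] at h1
    simp only [Module.finrank_pi, Fintype.card_fin] at h1
    have h2 : Module.finrank ℝ (LinearMap.ker G.mulVecLin) = 0 := by omega
    exact (Submodule.finrank_eq_zero).mp h2
  have : v ∈ LinearMap.ker G.mulVecLin := by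
    simpa [Matrix.mulVecLin] using hv
  rwa [hker, Submodule.mem_bot] at this

/-- If `n + k = m`, `D` is symmetric positive definite, `rank G = n`,
`rank Z = k` and `GᵀZ = 0`, then the square matrix `[DG Z]` is invertible. -/
theorem range_space_scaled_matrix_isUnit {m n k : ℕ} (hmk : n + k = m)
    (D : Matrix (Fin m) (Fin m) ℝ) (hD : D.PosDef)
    (G : Matrix (Fin m) (Fin n) ℝ) (Z : Matrix (Fin m) (Fin k) ℝ)
    (hG : G.rank = n) (hZ : Z.rank = k) (hGZ : Gᵀ * Z = 0) :
    IsUnit ((Matrix.fromCols (D * G) Z).submatrix (id : Fin m → Fin m)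
      ((finSumFinEquiv.trans (finCongr hmk)).symm : Fin m → Fin n ⊕ Fin k)) := by
  rw [Matrix.isUnit_iff_isUnit_det, isUnit_iff_ne_zero]
  intro hdet
  obtain ⟨v, hv, hv0⟩ := Matrix.exists_mulVec_eq_zero_iff.mpr hdet
  set e := (finSumFinEquiv.trans (finCongr hmk)) with he
  have hsub : ((Matrix.fromCols (D * G) Z).submatrix (id : Fin m → Fin m)
      (e.symm : Fin m → Fin n ⊕ Fin k)) *ᵥ v
      = (Matrix.fromCols (D * G) Z) *ᵥ (v ∘ e.symm.symm) := by
    exact Matrix.submatrix_mulVec_equiv _ _ _ _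
  rw [hsub] at hv0
  set u : Fin n → ℝ := fun i => v (e (Sum.inl i)) with hu
  set w : Fin k → ℝ := fun i => v (e (Sum.inr i)) with hw
  have hve : (v ∘ e.symm.symm) = Sum.elim u w := by
    funext s; rcases s with i | i <;> rfl
  rw [hve, Matrix.fromCols_mulVec_sumElim] at hv0
  -- multiply by Gᵀ
  have h1 : (Gᵀ * D * G) *ᵥ u = 0 := by
    have := congrArg (fun x => Gᵀ *ᵥ x) hv0
    simp only [Matrix.mulVec_add, Matrix.mulVec_mulVec] at this ⊢
    rw [← Matrix.mul_assoc, hGZ] at this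
    simpa [Matrix.mul_assoc] using this
  have hGu : G *ᵥ u = 0 := by
    by_contra hne
    have hpos := hD.dotProduct_mulVec_pos hne
    have hdot : u ⬝ᵥ ((Gᵀ * D * G) *ᵥ u) = (G *ᵥ u) ⬝ᵥ (D *ᵥ (G *ᵥ u)) := by
      rw [← Matrix.mulVec_mulVec, ← Matrix.mulVec_mulVec, Matrix.dotProduct_mulVec,
        Matrix.vecMul_transpose]
    rw [h1, dotProduct_zero] at hdot
    replace hdot := hdot.symm
    simp only [RCLike.re_to_real, star_trivial] at hpos
    rw [hdot] at hpos
    exact lt_irrefl _ hpos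
  have hu0 : u = 0 := full_rank_mulVec_eq_zero G hG hGu
  have hZw : Z *ᵥ w = 0 := by
    rw [hu0] at hv0
    simpa using hv0
  have hw0 : w = 0 := full_rank_mulVec_eq_zero Z hZ hZw
  apply hv
  funext j
  have := congrFun hve (e.symm j)
  simp only [Function.comp_apply, Equiv.symm_symm, Equiv.apply_symm_apply] at this
  rw [this, hu0, hw0]
  rcases e.symm j with i | i <;> rfl
end
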